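/- arXiv:1505.02838 — 3 statements merged into one kernel-verified Lean document; each statement's English description precedes it below -/
import Mathlib

section
/- Let G and H be finite simple graphs, and suppose G has no edges (G is a graph of isolated vertices). Then the independence complex Ind(H) is shellable if and only if the independence complex Ind(G[H]) of the lexicographical product G[H] is shellable. -/
open Finset

variable {V : Type*}

/-- A facet of a collection of faces `Δ` is a maximal face. -/
def IsFacet (Δ : Set (Finset V)) (F : Finset V) : Prop :=
  F ∈ Δ ∧ ∀ G ∈ Δ, F ⊆ G → F = G

/-- A complex is pure if all facets have the same cardinality. -/
def IsPure (Δ : Set (Finset V)) : Prop :=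
  ∀ F G, IsFacet Δ F → IsFacet Δ G → F.card = G.card

/-- Deletion of a vertex from a complex. -/
def del (Δ : Set (Finset V)) (x : V) : Set (Finset V) := {F ∈ Δ | x ∉ F}

/-- Link of a vertex in a complex. -/
def link [DecidableEq V] (Δ : Set (Finset V)) (x : V) : Set (Finset V) :=
  {F ∈ Δ | x ∉ F ∧ insert x F ∈ Δ}

/-- `F : Fin s → Finset V` is a shelling order of the facets of `Δ`. -/
def IsShelling [DecidableEq V] (Δ : Set (Finset V)) {s : ℕ} (F : Fin s → Finset V) : Prop :=
  (∀ i, IsFacet Δ (F i)) ∧ (∀ G, IsFacet Δ G → ∃ i, F i = G) ∧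
  Function.Injective F ∧
  (∀ i j : Fin s, j < i → ∃ x ∈ F i \ F j, ∃ k, k < i ∧ F i \ F k = {x})

/-- A complex is shellable if it is pure and admits a shelling order of its facets. -/
def Shellable [DecidableEq V] (Δ : Set (Finset V)) : Prop :=
  IsPure Δ ∧ ∃ (s : ℕ) (F : Fin s → Finset V), IsShelling Δ F

/-- A pure complex is vertex decomposable if it is a simplex (unique facet), or some vertex
has pure, vertex decomposable deletion and link. -/
inductive VertexDecomposable [DecidableEq V] : Set (Finset V) → Prop
  | simplex (Δ : Set (Finset V)) (h : ∃! F, IsFacet Δ F) : VertexDecomposable Δ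
  | step (Δ : Set (Finset V)) (x : V)
      (hdp : IsPure (del Δ x)) (hlp : IsPure (link Δ x))
      (hd : VertexDecomposable (del Δ x)) (hl : VertexDecomposable (link Δ x)) :
      VertexDecomposable Δ

/-- The independence complex of a graph: all independent sets. -/
def indComplex (G : SimpleGraph V) : Set (Finset V) :=
  {F | ∀ v ∈ F, ∀ w ∈ F, ¬ G.Adj v w}

/-- The lexicographical product `G[H]`. -/
def lexProd {α β : Type*} (G : SimpleGraph α) (H : SimpleGraph β) :
    SimpleGraph (α × β) where
  Adj p q := G.Adj p.1 q.1 ∨ (p.1 = q.1 ∧ H.Adj p.2 q.2)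
  symm := by
    constructor
    rintro p q (h | ⟨h1, h2⟩)
    · exact Or.inl h.symm
    · exact Or.inr ⟨h1.symm, h2.symm⟩
  loopless := by
    constructor
    rintro p (h | ⟨_, h⟩)
    · exact G.loopless.irrefl _ h
    · exact H.loopless.irrefl _ h

/-- The independence number of a graph. -/
noncomputable def indepNum (G : SimpleGraph V) : ℕ :=
  sSup {n | ∃ F : Finset V, F ∈ indComplex G ∧ F.card = n}

/-- The expansion of a graph `G`, where vertex `v` is replaced by `s v` copies,
and distinct vertices `(i,j)` and `(k,l)` are adjacent iff `i ~ k` in `G` or `i = k`. -/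
def expansion (G : SimpleGraph V) (s : V → ℕ) : SimpleGraph (Σ v : V, Fin (s v)) where
  Adj p q := p ≠ q ∧ (G.Adj p.1 q.1 ∨ p.1 = q.1)
  symm := by
    constructor
    rintro p q ⟨h1, h2 | h2⟩
    · exact ⟨h1.symm, Or.inl h2.symm⟩
    · exact ⟨h1.symm, Or.inr h2.symm⟩
  loopless := by constructor; rintro p ⟨h, _⟩; exact h rfl

/-- The circulant graph `C_n(S)`: vertices `x_a`, `x_b` are adjacent iff
`|a-b| ∈ S` or `n - |a-b| ∈ S`. -/
def circulant (n : ℕ) (S : Set ℕ) : SimpleGraph (Fin n) where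
  Adj a b := a ≠ b ∧ ((max a.val b.val - min a.val b.val) ∈ S ∨
      (n - (max a.val b.val - min a.val b.val)) ∈ S)
  symm := by
    constructor
    rintro a b ⟨h1, h2⟩
    refine ⟨h1.symm, ?_⟩
    rwa [max_comm, min_comm]
  loopless := by constructor; rintro a ⟨h, _⟩; exact h rfl

section Aux

variable {α β : Type*} [Fintype α] [Fintype β] [DecidableEq α] [DecidableEq β]

/-- The fiber of a set of pairs over a first coordinate. -/
def fib (a : α) (E : Finset (α × β)) : Finset β :=
  (E.filter (fun p => p.1 = a)).image Prod.snd

lemma mem_fib {a : α} {x : β} {E : Finset (α × β)} : x ∈ fib a E ↔ (a, x) ∈ E := by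
  constructor
  · intro hx
    simp only [fib, mem_image, mem_filter] at hx
    obtain ⟨p, ⟨hp, h1⟩, h2⟩ := hx
    rwa [← h1, ← h2, Prod.mk.eta]
  · intro h
    simp only [fib, mem_image, mem_filter]
    exact ⟨(a, x), ⟨h, rfl⟩, rfl⟩

lemma fib_mono {a : α} {E E' : Finset (α × β)} (h : E ⊆ E') : fib a E ⊆ fib a E' :=
  fun x hx => mem_fib.2 (h (mem_fib.1 hx))

/-- The set of pairs with prescribed fibers. -/
def tup (t : α → Finset β) : Finset (α × β) :=
  univ.filter (fun p => p.2 ∈ t p.1)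

lemma mem_tup {t : α → Finset β} {a : α} {x : β} : (a, x) ∈ tup t ↔ x ∈ t a := by
  simp [tup]

lemma fib_tup (t : α → Finset β) (a : α) : fib a (tup t) = t a := by
  ext x; rw [mem_fib, mem_tup]

lemma tup_fib (E : Finset (α × β)) : tup (fun a => fib a E) = E := by
  ext ⟨a, x⟩; rw [mem_tup, mem_fib]

lemma eq_of_fib_eq {E E' : Finset (α × β)} (h : ∀ a, fib a E = fib a E') : E = E' := by
  rw [← tup_fib E, ← tup_fib E']
  exact congrArg tup (funext h)

lemma tup_mono {t t' : α → Finset β} (h : ∀ a, t a ⊆ t' a) : tup t ⊆ tup t' := by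
  intro ⟨a, x⟩ hx
  rw [mem_tup] at hx ⊢
  exact h a hx

lemma card_fib (a : α) (E : Finset (α × β)) :
    (fib a E).card = (E.filter (fun p => p.1 = a)).card := by
  apply card_image_of_injOn
  intro p hp q hq h
  simp only [coe_filter, Set.mem_setOf_eq] at hp hq
  exact Prod.ext (hp.2.trans hq.2.symm) h

lemma card_eq_sum_fib (E : Finset (α × β)) : E.card = ∑ a, (fib a E).card := by
  rw [card_eq_sum_card_fiberwise (f := Prod.fst) (t := univ) (fun x _ => mem_univ _)]
  exact sum_congr rfl fun a _ => (card_fib a E).symm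

lemma empty_mem_ind (H : SimpleGraph β) : (∅ : Finset β) ∈ indComplex H :=
  fun v hv => (notMem_empty v hv).elim

lemma exists_facet {W : Type*} [Fintype W] [DecidableEq W] (Δ : Set (Finset W))
    {A : Finset W} (hA : A ∈ Δ) : ∃ M, IsFacet Δ M ∧ A ⊆ M := by
  obtain ⟨M, hM, hmax⟩ := Set.Finite.exists_maximalFor (fun F : Finset W => F.card)
    {F | F ∈ Δ ∧ A ⊆ F} (Set.toFinite _) ⟨A, hA, subset_rfl⟩
  refine ⟨M, ⟨hM.1, fun G hG hMG => ?_⟩, hM.2⟩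
  exact Finset.eq_of_subset_of_card_le hMG
    (hmax ⟨hG, hM.2.trans hMG⟩ (card_le_card hMG))

variable {G : SimpleGraph α} {H : SimpleGraph β}

lemma mem_indLex (hG : ∀ v w, ¬ G.Adj v w) {E : Finset (α × β)} :
    E ∈ indComplex (lexProd G H) ↔ ∀ a, fib a E ∈ indComplex H := by
  constructor
  · intro h a x hx z hz hadj
    exact h _ (mem_fib.1 hx) _ (mem_fib.1 hz) (Or.inr ⟨rfl, hadj⟩)
  · rintro h ⟨a, x⟩ hax ⟨b, z⟩ hbz hadj
    rcases hadj with hadj | ⟨rfl, hadj⟩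
    · exact hG _ _ hadj
    · exact h a _ (mem_fib.2 hax) _ (mem_fib.2 hbz) hadj

lemma facet_indLex (hG : ∀ v w, ¬ G.Adj v w) {E : Finset (α × β)} :
    IsFacet (indComplex (lexProd G H)) E ↔ ∀ a, IsFacet (indComplex H) (fib a E) := by
  constructor
  · rintro ⟨hE, hmax⟩ a
    refine ⟨(mem_indLex hG).1 hE a, fun T hT hsub => ?_⟩
    set t' : α → Finset β := fun b => if b = a then T else fib b E with ht'
    have hsubE : E ⊆ tup t' := by
      calc E = tup (fun b => fib b E) := (tup_fib E).symm
        _ ⊆ tup t' := by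
          apply tup_mono
          intro b
          by_cases hb : b = a
          · subst hb; simp only [ht', if_pos rfl]; exact hsub
          · simp only [ht', if_neg hb]; exact subset_rfl
    have hmemE' : tup t' ∈ indComplex (lexProd G H) := by
      rw [mem_indLex hG]
      intro b
      rw [fib_tup]
      by_cases hb : b = a
      · subst hb; simpa only [ht', if_pos rfl] using hT
      · simpa only [ht', if_neg hb] using (mem_indLex hG).1 hE b
    have hEeq := hmax _ hmemE' hsubE
    have : fib a E = fib a (tup t') := by rw [← hEeq]
    rw [fib_tup, ht'] at this
    simpa using this
  · intro hE
    refine ⟨(mem_indLex hG).2 fun a => (hE a).1, fun E' hE' hsub => ?_⟩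
    apply eq_of_fib_eq
    intro a
    exact (hE a).2 _ ((mem_indLex hG).1 hE' a) (fib_mono hsub)

lemma backward_dir [Nonempty α] (hG : ∀ v w, ¬ G.Adj v w) :
    Shellable (indComplex (lexProd G H)) → Shellable (indComplex H) := by
  rintro ⟨hpure, s, F, hfac, hsurj, hinj, hstep⟩
  obtain ⟨M, hM, -⟩ := exists_facet (indComplex H) (empty_mem_ind H)
  set a0 : α := Classical.arbitrary α with ha0
  have build : ∀ T : Finset β, IsFacet (indComplex H) T →
      IsFacet (indComplex (lexProd G H)) (tup (fun a => if a = a0 then T else M)) := by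
    intro T hT
    rw [facet_indLex hG]
    intro a
    rw [fib_tup]
    split_ifs
    exacts [hT, hM]
  have cardb : ∀ T : Finset β, (tup (fun a => if a = a0 then T else M)).card
      = T.card + ∑ a ∈ univ.erase a0, M.card := by
    intro T
    rw [card_eq_sum_fib, ← Finset.add_sum_erase _ _ (mem_univ a0)]
    congr 1
    · rw [fib_tup, if_pos rfl]
    · exact sum_congr rfl fun a ha => by
        rw [fib_tup, if_neg (Finset.ne_of_mem_erase ha)]
  constructor
  · -- purity
    intro T T' hT hT'
    have := hpure _ _ (build T hT) (build T' hT')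
    rw [cardb, cardb] at this
    exact Nat.add_right_cancel this
  · -- shelling
    set S : Finset (Fin s) := univ.filter (fun i => ∀ a, a ≠ a0 → fib a (F i) = M) with hS
    have memS : ∀ {i : Fin s}, i ∈ S ↔ ∀ a, a ≠ a0 → fib a (F i) = M := by
      intro i; simp [hS]
    set iso := S.orderIsoOfFin rfl with hiso
    refine ⟨S.card, fun j => fib a0 (F (iso j)), ?_, ?_, ?_, ?_⟩
    · intro j
      exact (facet_indLex hG).1 (hfac _) a0
    · -- surjective onto facets
      intro T hT
      obtain ⟨i, hi⟩ := hsurj _ (build T hT)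
      have hiS : i ∈ S := by
        rw [memS]
        intro a ha
        rw [hi, fib_tup, if_neg ha]
      refine ⟨iso.symm ⟨i, hiS⟩, ?_⟩
      show fib a0 (F ((iso (iso.symm ⟨i, hiS⟩) : S) : Fin s)) = T
      rw [iso.apply_symm_apply, hi, fib_tup, if_pos rfl]
    · -- injective
      intro j j' h
      have hall : F ((iso j : Fin s)) = F ((iso j' : Fin s)) := by
        apply eq_of_fib_eq
        intro a
        by_cases haa : a = a0
        · subst haa; exact h
        · rw [memS.1 (iso j).2 a haa, memS.1 (iso j').2 a haa]
      have := hinj hall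
      have : iso j = iso j' := Subtype.ext this
      exact iso.injective this
    · -- shelling step
      intro j j' hjj
      have hlt : ((iso j' : Fin s)) < ((iso j : Fin s)) := by
        exact_mod_cast iso.strictMono hjj
      obtain ⟨p, hp, k, hk, hdiff⟩ := hstep _ _ hlt
      obtain ⟨pa, x⟩ := p
      rw [mem_sdiff] at hp
      have hpa : pa = a0 := by
        by_contra hne
        have h1 : x ∈ fib pa (F (iso j)) := mem_fib.2 hp.1
        rw [memS.1 (iso j).2 pa hne] at h1
        rw [← memS.1 (iso j').2 pa hne] at h1
        exact hp.2 (mem_fib.1 h1)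
      subst hpa
      have hkS : k ∈ S := by
        rw [memS]
        intro a ha
        have hsub : M ⊆ fib a (F k) := by
          rw [← memS.1 (iso j).2 a ha]
          intro y hy
          rw [mem_fib] at hy ⊢
          by_contra hnot
          have : (a, y) ∈ F (iso j) \ F k := mem_sdiff.2 ⟨hy, hnot⟩
          rw [hdiff, mem_singleton] at this
          exact ha (congrArg Prod.fst this)
        exact ((hM.2 _ ((mem_indLex hG).1 (hfac k).1 a) hsub)).symm
      refine ⟨x, ?_, iso.symm ⟨k, hkS⟩, ?_, ?_⟩
      · rw [mem_sdiff]
        constructor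
        · exact mem_fib.2 hp.1
        · intro hmem
          exact hp.2 (mem_fib.1 hmem)
      · have : iso (iso.symm ⟨k, hkS⟩) < iso j := by
          rw [iso.apply_symm_apply]
          exact_mod_cast hk
        exact iso.lt_iff_lt.1 this
      · show fib a0 (F ((iso j : Fin s))) \ fib a0 (F ((iso (iso.symm ⟨k, hkS⟩) : S) : Fin s)) = {x}
        rw [iso.apply_symm_apply]
        ext y
        rw [mem_sdiff, mem_singleton]
        constructor
        · rintro ⟨h1, h2⟩
          have : (a0, y) ∈ F (iso j) \ F k :=
            mem_sdiff.2 ⟨mem_fib.1 h1, fun hc => h2 (mem_fib.2 hc)⟩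
          rw [hdiff, mem_singleton] at this
          exact congrArg Prod.snd this
        · rintro rfl
          have : (a0, y) ∈ F (iso j) \ F k := by rw [hdiff]; exact mem_singleton_self _
          rw [mem_sdiff] at this
          exact ⟨mem_fib.2 this.1, fun hc => this.2 (mem_fib.1 hc)⟩

noncomputable def lexLin (m s : ℕ) : LinearOrder (Lex (Fin m → Fin s)) :=
  @Pi.Lex.linearOrder _ _ _ Finite.to_wellFoundedLT _

def lexFin (m s : ℕ) : Fintype (Lex (Fin m → Fin s)) :=
  inferInstanceAs (Fintype (Fin m → Fin s))

lemma exists_lex_enum (m s : ℕ) : ∃ (N : ℕ) (φ : Fin N ≃ (Fin m → Fin s)),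
    ∀ a b : Fin N, (Pi.Lex (· < ·) (@fun _ => (· < ·)) (φ a) (φ b) ↔ a < b) := by
  letI := lexLin m s
  letI := lexFin m s
  let iso := Fintype.orderIsoFinOfCardEq (Lex (Fin m → Fin s)) rfl
  refine ⟨_, iso.toEquiv, fun a b => ?_⟩
  have h := iso.lt_iff_lt (x := a) (y := b)
  exact h

lemma forward_dir (hG : ∀ v w, ¬ G.Adj v w) :
    Shellable (indComplex H) → Shellable (indComplex (lexProd G H)) := by
  rintro ⟨hpure, s, F, hfac, hsurj, hinj, hstep⟩
  constructor
  · -- purity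
    intro E E' hE hE'
    rw [facet_indLex hG] at hE hE'
    rw [card_eq_sum_fib E, card_eq_sum_fib E']
    exact sum_congr rfl fun a _ => hpure _ _ (hE a) (hE' a)
  · -- shelling
    obtain ⟨N, φ, hφ⟩ := exists_lex_enum (Fintype.card α) s
    set e : α ≃ Fin (Fintype.card α) := Fintype.equivFin α with he
    set Ψ : (Fin (Fintype.card α) → Fin s) → Finset (α × β) :=
      fun u => tup (fun a => F (u (e a))) with hΨ
    have fibΨ : ∀ (u : Fin (Fintype.card α) → Fin s) (a : α),
        fib a (Ψ u) = F (u (e a)) := by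
      intro u a; rw [hΨ]; exact fib_tup _ a
    refine ⟨N, fun i => Ψ (φ i), ?_, ?_, ?_, ?_⟩
    · intro i
      rw [facet_indLex hG]
      intro a
      rw [fibΨ]
      exact hfac _
    · -- surjective
      intro E hE
      rw [facet_indLex hG] at hE
      choose g hg using fun a => hsurj _ (hE a)
      refine ⟨φ.symm (fun l => g (e.symm l)), ?_⟩
      apply eq_of_fib_eq
      intro a
      rw [fibΨ, φ.apply_symm_apply]
      show F (g (e.symm (e a))) = fib a E
      rw [e.symm_apply_apply]
      exact hg a
    · -- injective
      intro i i' h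
      apply φ.injective
      funext l
      apply hinj
      have := congrArg (fib (e.symm l)) h
      rw [fibΨ, fibΨ, e.apply_symm_apply] at this
      exact this
    · -- shelling step
      intro i j hji
      obtain ⟨J, hJ1, hJ2⟩ := (hφ j i).2 hji
      obtain ⟨x, hx, k, hk, hdiff⟩ := hstep _ _ hJ2
      set w : Fin (Fintype.card α) → Fin s := Function.update (φ i) J k with hw
      have hwlt : Pi.Lex (· < ·) (@fun _ => (· < ·)) w (φ i) := by
        refine ⟨J, ?_, ?_⟩
        · intro l hl
          exact Function.update_of_ne (ne_of_lt hl) _ _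
        · show w J < φ i J
          rw [hw, Function.update_self]
          exact hk
      have hii' : φ.symm w < i := by
        apply (hφ (φ.symm w) i).1
        rwa [φ.apply_symm_apply]
      refine ⟨(e.symm J, x), ?_, φ.symm w, hii', ?_⟩
      · rw [mem_sdiff, hΨ]
        rw [mem_sdiff] at hx
        constructor
        · rw [mem_tup, e.apply_symm_apply]
          exact hx.1
        · rw [mem_tup, e.apply_symm_apply]
          exact hx.2
      · show Ψ (φ i) \ Ψ (φ (φ.symm w)) = {(e.symm J, x)}
        rw [φ.apply_symm_apply]
        ext ⟨a, y⟩
        simp only [hΨ, mem_sdiff, mem_singleton, mem_tup, Prod.mk.injEq]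
        by_cases hJa : e a = J
        · have haJ : a = e.symm J := by rw [← hJa, e.symm_apply_apply]
          have hwJ : w (e a) = k := by rw [hJa, hw, Function.update_self]
          rw [hwJ, hJa]
          constructor
          · rintro ⟨h1, h2⟩
            have hmem : y ∈ F (φ i J) \ F k := mem_sdiff.2 ⟨h1, h2⟩
            rw [hdiff, mem_singleton] at hmem
            exact ⟨haJ, hmem⟩
          · rintro ⟨-, rfl⟩
            have hmem : y ∈ F (φ i J) \ F k := by
              rw [hdiff]; exact mem_singleton_self _
            rw [mem_sdiff] at hmem
            exact hmem
        · have hwa : w (e a) = φ i (e a) := Function.update_of_ne hJa _ _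
          rw [hwa]
          constructor
          · rintro ⟨h1, h2⟩
            exact absurd h1 h2
          · rintro ⟨rfl, -⟩
            exact absurd (e.apply_symm_apply J) hJa

end Aux

theorem stmt0 {α β : Type*} [Fintype α] [Fintype β] [DecidableEq α] [DecidableEq β]
    [Nonempty α] (G : SimpleGraph α) (H : SimpleGraph β)
    (hG : ∀ v w, ¬ G.Adj v w) :
    Shellable (indComplex H) ↔ Shellable (indComplex (lexProd G H)) :=
  ⟨forward_dir hG, backward_dir hG⟩
end

section
/- Let G and H be finite simple graphs, and suppose G has at least one edge. Then the independence complex Ind(G[H]) of the lexicographical product G[H] is vertex decomposable if and only if Ind(G) is vertex decomposable and H is a complete graph K_m for some m ≥ 1. -/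
open Finset

variable {V : Type*}

section Dev
variable {V : Type*}

/-- Downward closed collection of faces. -/
def DC (Δ : Set (Finset V)) : Prop := ∀ ⦃F G : Finset V⦄, F ⊆ G → G ∈ Δ → F ∈ Δ

lemma DC.del (hΔ : DC Δ) (x : V) : DC (del Δ x) := by
  intro F G hFG hG
  exact ⟨hΔ hFG hG.1, fun hx => hG.2 (hFG hx)⟩

lemma DC.link [DecidableEq V] {Δ : Set (Finset V)} (hΔ : DC Δ) (x : V) : DC (link Δ x) := by
  intro F G hFG hG
  refine ⟨hΔ hFG hG.1, fun hx => hG.2.1 (hFG hx), hΔ ?_ hG.2.2⟩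
  exact Finset.insert_subset_insert _ hFG

lemma exists_facet_s2 [Fintype V] {Δ : Set (Finset V)} {F : Finset V} (hF : F ∈ Δ) :
    ∃ G, F ⊆ G ∧ IsFacet Δ G := by
  classical
  have hfin : {G : Finset V | G ∈ Δ ∧ F ⊆ G}.Finite := Set.toFinite _
  obtain ⟨G, hG, hmax⟩ := Set.Finite.exists_maximalFor (fun G : Finset V => G.card)
    _ hfin ⟨F, hF, Finset.Subset.refl F⟩
  refine ⟨G, hG.2, hG.1, fun K hK hGK => ?_⟩
  have hFK : F ⊆ K := hG.2.trans hGK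
  exact Finset.eq_of_subset_of_card_le hGK
    (@hmax K ⟨hK, hFK⟩ (Finset.card_le_card hGK))

lemma card_le_of_pure [Fintype V] {Δ : Set (Finset V)} (hp : IsPure Δ) {F D : Finset V}
    (hF : F ∈ Δ) (hD : IsFacet Δ D) : F.card ≤ D.card := by
  obtain ⟨K, hFK, hK⟩ := exists_facet_s2 hF
  calc F.card ≤ K.card := Finset.card_le_card hFK
    _ = D.card := hp K D hK hD

lemma facet_sdiff_card {V : Type*} [DecidableEq V] {Δ : Set (Finset V)} (hp : IsPure Δ)
    {F G : Finset V} (hF : IsFacet Δ F) (hG : IsFacet Δ G) :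
    (F \ G).card = (G \ F).card := by
  have h1 := Finset.card_sdiff_add_card_inter F G
  have h2 := Finset.card_sdiff_add_card_inter G F
  rw [Finset.inter_comm] at h2
  have h3 := hp F G hF hG
  omega

section SC
set_option linter.unusedSectionVars false
variable {V : Type*} [Fintype V] [DecidableEq V] {Δ : Set (Finset V)} {x : V}

lemma ins_sdiff {V : Type*} [DecidableEq V] {K : Finset V} {x : V} (hx : x ∈ K) :
    insert x (K \ {x}) = K := by
  rw [Finset.sdiff_singleton_eq_erase, Finset.insert_erase hx]

lemma facet_del_of_facet (hF : IsFacet Δ F) (hx : x ∉ F) : IsFacet (del Δ x) F := by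
  exact ⟨⟨hF.1, hx⟩, fun K hK hFK => hF.2 K hK.1 hFK⟩

lemma facet_of_facet_del (hDC : DC Δ) {K : Finset V} (hK : IsFacet (del Δ x) K) :
    IsFacet Δ K ∨ ∃ F, IsFacet Δ F ∧ x ∈ F ∧ K = F \ {x} := by
  obtain ⟨F, hKF, hF⟩ := exists_facet_s2 hK.1.1
  by_cases hx : x ∈ F
  · refine Or.inr ⟨F, hF, hx, ?_⟩
    have h1 : F \ {x} ∈ del Δ x := ⟨hDC (Finset.sdiff_subset) hF.1, by simp⟩
    have h2 : K ⊆ F \ {x} := Finset.subset_sdiff.2 ⟨hKF, by simp [hK.1.2]⟩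
    exact hK.2 _ h1 h2
  · left
    have := hK.2 F ⟨hF.1, hx⟩ hKF
    exact this ▸ hF

lemma facet_link_insert (hDC : DC Δ) {L : Finset V} (hL : IsFacet (link Δ x) L) :
    IsFacet Δ (insert x L) ∧ x ∉ L := by
  refine ⟨⟨hL.1.2.2, fun K hK hLK => ?_⟩, hL.1.2.1⟩
  have hxK : x ∈ K := hLK (Finset.mem_insert_self _ _)
  have hK' : K \ {x} ∈ link Δ x :=
    ⟨hDC Finset.sdiff_subset hK, by simp, by rw [ins_sdiff hxK]; exact hK⟩
  have hsub : L ⊆ K \ {x} := Finset.subset_sdiff.2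
    ⟨(Finset.subset_insert x L).trans hLK, Finset.disjoint_singleton_right.2 hL.1.2.1⟩
  have := hL.2 _ hK' hsub
  rw [this, ins_sdiff hxK]

lemma facet_link_of_facet (hDC : DC Δ) {F : Finset V} (hF : IsFacet Δ F) (hx : x ∈ F) :
    IsFacet (link Δ x) (F \ {x}) := by
  constructor
  · exact ⟨hDC Finset.sdiff_subset hF.1, by simp, by rw [ins_sdiff hx]; exact hF.1⟩
  · intro L hL hFL
    have h1 : F ⊆ insert x L := by
      intro a ha
      by_cases hax : a = x
      · simp [hax]
      · exact Finset.mem_insert_of_mem (hFL (Finset.mem_sdiff.2 ⟨ha, by simp [hax]⟩))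
    have h2 := hF.2 _ hL.2.2 h1
    have : L ⊆ F \ {x} := Finset.subset_sdiff.2
      ⟨(Finset.subset_insert x L).trans (le_of_eq h2.symm), by simp [hL.2.1]⟩
    exact Finset.Subset.antisymm hFL this

lemma facet_of_facet_del_card (hp : IsPure Δ) {K D : Finset V} (hK : IsFacet (del Δ x) K)
    (hD : IsFacet Δ D) (hcard : K.card = D.card) : IsFacet Δ K := by
  refine ⟨hK.1.1, fun K' hK' hKK' => ?_⟩
  exact Finset.eq_of_subset_of_card_le hKK' (hcard ▸ card_le_of_pure hp hK' hD)

/-- Facet-ridge relation. -/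
def FR (Δ : Set (Finset V)) (F G : Finset V) : Prop :=
  IsFacet Δ F ∧ IsFacet Δ G ∧ (F \ G).card ≤ 1

/-- Strongly connected. -/
def SC (Δ : Set (Finset V)) : Prop :=
  ∀ F G, IsFacet Δ F → IsFacet Δ G → Relation.ReflTransGen (FR Δ) F G

theorem sc_of_vd (hvd : VertexDecomposable Δ) : DC Δ → IsPure Δ → SC Δ := by
  induction hvd with
  | simplex Δ h =>
    intro _ _ F G hF hG
    obtain ⟨F0, _, hudef⟩ := h
    rw [hudef F hF, hudef G hG]
  | step Δ x hdp hlp hd hl IHd IHl =>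
    intro hDC hp
    have IHdel := IHd (hDC.del x) hdp
    have IHlink := IHl (hDC.link x) hlp
    -- type A facets (containing x) are connected
    have hA : ∀ F G, IsFacet Δ F → IsFacet Δ G → x ∈ F → x ∈ G →
        Relation.ReflTransGen (FR Δ) F G := by
      intro F G hF hG hxF hxG
      have h1 := facet_link_of_facet hDC hF hxF
      have h2 := facet_link_of_facet hDC hG hxG
      have hchain := IHlink _ _ h1 h2
      have hmap : Relation.ReflTransGen (FR Δ) (insert x (F \ {x})) (insert x (G \ {x})) := by
        refine Relation.ReflTransGen.lift (fun L => insert x L) ?_ _ _ hchain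
        intro a b hab
        have ha := facet_link_insert hDC hab.1
        have hb := facet_link_insert hDC hab.2.1
        refine ⟨ha.1, hb.1, ?_⟩
        have : insert x a \ insert x b = a \ b := by
          ext u; simp only [Finset.mem_sdiff, Finset.mem_insert]
          constructor
          · rintro ⟨hu1 | hu1, hu2⟩
            · exact absurd (Or.inl hu1) hu2
            · exact ⟨hu1, fun h => hu2 (Or.inr h)⟩
          · rintro ⟨hu1, hu2⟩
            exact ⟨Or.inr hu1, fun h => h.elim (fun h' => ha.2 (h' ▸ hu1)) hu2⟩
        rw [this]; exact hab.2.2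
      rwa [ins_sdiff hxF, ins_sdiff hxG] at hmap
    intro F G hF hG
    by_cases hB : ∃ B, IsFacet Δ B ∧ x ∉ B
    · obtain ⟨B0, hB0, hxB0⟩ := hB
      -- every facet of del is a facet of Δ
      have hC3 : ∀ K, IsFacet (del Δ x) K → IsFacet Δ K := by
        intro K hK
        have hBdel := facet_del_of_facet hB0 hxB0
        have hcard : K.card = B0.card := hdp K B0 hK hBdel
        exact facet_of_facet_del_card hp hK hB0 hcard
      -- every facet gets to a type B facet in ≤ 1 step
      have hC4 : ∀ F', IsFacet Δ F' → ∃ B, IsFacet Δ B ∧ x ∉ B ∧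
          Relation.ReflTransGen (FR Δ) F' B ∧ Relation.ReflTransGen (FR Δ) B F' := by
        intro F' hF'
        by_cases hx : x ∈ F'
        · have hdelmem : F' \ {x} ∈ del Δ x := ⟨hDC Finset.sdiff_subset hF'.1, by simp⟩
          obtain ⟨K, hsub, hK⟩ := exists_facet_s2 hdelmem
          have hKfac := hC3 K hK
          have hxK : x ∉ K := hK.1.2
          have hFK : (F' \ K).card ≤ 1 := by
            have : F' \ K ⊆ {x} := by
              intro a ha
              rw [Finset.mem_sdiff] at ha
              by_contra hax
              exact ha.2 (hsub (Finset.mem_sdiff.2 ⟨ha.1, by simpa using hax⟩))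
            calc (F' \ K).card ≤ ({x} : Finset V).card := Finset.card_le_card this
              _ = 1 := Finset.card_singleton x
          have hKF : (K \ F').card ≤ 1 := by
            rw [facet_sdiff_card hp hKfac hF']; exact hFK
          exact ⟨K, hKfac, hxK, Relation.ReflTransGen.single ⟨hF', hKfac, hFK⟩,
            Relation.ReflTransGen.single ⟨hKfac, hF', hKF⟩⟩
        · exact ⟨F', hF', hx, Relation.ReflTransGen.refl, Relation.ReflTransGen.refl⟩
      obtain ⟨BF, hBF, hxBF, hFBF, _⟩ := hC4 F hF
      obtain ⟨BG, hBG, hxBG, _, hBGG⟩ := hC4 G hG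
      have hmid : Relation.ReflTransGen (FR Δ) BF BG := by
        have h1 := facet_del_of_facet hBF hxBF
        have h2 := facet_del_of_facet hBG hxBG
        refine Relation.ReflTransGen.mono ?_ _ _ (IHdel _ _ h1 h2)
        intro a b hab
        exact ⟨hC3 a hab.1, hC3 b hab.2.1, hab.2.2⟩
      exact (hFBF.trans hmid).trans hBGG
    · push_neg at hB
      exact hA F G hF hG (hB F hF) (hB G hG)

end SC

end Dev

section Infl
set_option linter.unusedSectionVars false
variable {α β : Type*} [Fintype α] [Fintype β] [DecidableEq α] [DecidableEq β]

/-- Inflation of a complex: faces are partial functions lying over faces of `Δ0`,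
with values constrained by `c`. -/
def Infl (Δ0 : Set (Finset α)) (c : α → Finset β) : Set (Finset (α × β)) :=
  {F | (∀ p ∈ F, p.2 ∈ c p.1) ∧ (∀ p ∈ F, ∀ q ∈ F, p.1 = q.1 → p = q) ∧
    F.image Prod.fst ∈ Δ0}

lemma DC.infl {Δ0 : Set (Finset α)} (h : DC Δ0) (c : α → Finset β) : DC (Infl Δ0 c) := by
  intro F G hFG hG
  exact ⟨fun p hp => hG.1 p (hFG hp), fun p hp q hq => hG.2.1 p (hFG hp) q (hFG hq),
    h (Finset.image_subset_image hFG) hG.2.2⟩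

/-- Graph of a function over a finset. -/
def liftF (S : Finset α) (f : α → β) : Finset (α × β) := S.image (fun v => (v, f v))

lemma liftF_image_fst (S : Finset α) (f : α → β) : (liftF S f).image Prod.fst = S := by
  ext a; simp [liftF]

lemma liftF_card (S : Finset α) (f : α → β) : (liftF S f).card = S.card := by
  apply Finset.card_image_of_injOn
  intro a _ b _ h
  exact congrArg Prod.fst h

lemma mem_liftF {S : Finset α} {f : α → β} {p : α × β} :
    p ∈ liftF S f ↔ p.1 ∈ S ∧ p.2 = f p.1 := by
  simp only [liftF, Finset.mem_image]
  constructor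
  · rintro ⟨a, ha, rfl⟩; exact ⟨ha, rfl⟩
  · rintro ⟨h1, h2⟩; exact ⟨p.1, h1, by rw [← h2]⟩

lemma liftF_mem_infl {Δ0 : Set (Finset α)} {c : α → Finset β} {S : Finset α} {f : α → β}
    (hS : S ∈ Δ0) (hf : ∀ v, f v ∈ c v) : liftF S f ∈ Infl Δ0 c := by
  refine ⟨?_, ?_, by rwa [liftF_image_fst]⟩
  · intro p hp; rw [mem_liftF] at hp; rw [hp.2]; exact hf p.1
  · intro p hp q hq h
    rw [mem_liftF] at hp hq
    exact Prod.ext h (by rw [hp.2, hq.2, h])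

lemma infl_card_eq {Δ0 : Set (Finset α)} {c : α → Finset β} {F : Finset (α × β)}
    (hF : F ∈ Infl Δ0 c) : (F.image Prod.fst).card = F.card :=
  Finset.card_image_of_injOn (fun p hp q hq h => hF.2.1 p hp q hq h)

lemma facet_infl_proj {Δ0 : Set (Finset α)} {c : α → Finset β} {F : Finset (α × β)}
    (hDC : DC Δ0) (hc : ∀ v, (c v).Nonempty) (hF : IsFacet (Infl Δ0 c) F) :
    IsFacet Δ0 (F.image Prod.fst) := by
  refine ⟨hF.1.2.2, fun S hS hsub => Finset.Subset.antisymm hsub ?_⟩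
  intro u hu
  by_contra hnot
  obtain ⟨j, hj⟩ := hc u
  have hF' : insert (u, j) F ∈ Infl Δ0 c := by
    refine ⟨?_, ?_, ?_⟩
    · intro p hp
      rcases Finset.mem_insert.1 hp with rfl | hp
      · exact hj
      · exact hF.1.1 p hp
    · have hne : ∀ p ∈ F, p.1 ≠ u := fun p hp h =>
        hnot (h ▸ Finset.mem_image_of_mem Prod.fst hp)
      intro p hp q hq h
      rcases Finset.mem_insert.1 hp with h1 | h1 <;> rcases Finset.mem_insert.1 hq with h2 | h2
      · rw [h1, h2]
      · exact absurd (by rw [← h, h1] : q.1 = u).symm (Ne.symm (hne q h2))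
      · exact absurd (by rw [h, h2] : p.1 = u) (hne p h1)
      · exact hF.1.2.1 p h1 q h2 h
    · rw [Finset.image_insert]
      exact hDC (Finset.insert_subset hu hsub) hS
  have := hF.2 _ hF' (Finset.subset_insert _ _)
  have : (u, j) ∈ F := this ▸ Finset.mem_insert_self _ _
  exact hnot (Finset.mem_image_of_mem Prod.fst this)

lemma facet_infl_liftF {Δ0 : Set (Finset α)} {c : α → Finset β} {S : Finset α} {f : α → β}
    (hf : ∀ v, f v ∈ c v) (hS : IsFacet Δ0 S) : IsFacet (Infl Δ0 c) (liftF S f) := by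
  refine ⟨liftF_mem_infl hS.1 hf, fun K hK hsub => ?_⟩
  have h1 : S ⊆ K.image Prod.fst := by
    rw [← liftF_image_fst S f]; exact Finset.image_subset_image hsub
  have h2 : S = K.image Prod.fst := hS.2 _ hK.2.2 h1
  apply Finset.eq_of_subset_of_card_le hsub
  rw [← infl_card_eq hK, ← h2, liftF_card]

lemma IsPure.infl {Δ0 : Set (Finset α)} {c : α → Finset β}
    (hp : IsPure Δ0) (hDC : DC Δ0) (hc : ∀ v, (c v).Nonempty) : IsPure (Infl Δ0 c) := by
  intro F G hF hG
  rw [← infl_card_eq hF.1, ← infl_card_eq hG.1]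
  exact hp _ _ (facet_infl_proj hDC hc hF) (facet_infl_proj hDC hc hG)

lemma IsPure.of_infl {Δ0 : Set (Finset α)} {c : α → Finset β}
    (hp : IsPure (Infl Δ0 c)) (hDC : DC Δ0) (hc : ∀ v, (c v).Nonempty) : IsPure Δ0 := by
  intro S S' hS hS'
  have hf : ∀ v, (fun v => (hc v).choose) v ∈ c v := fun v => (hc v).choose_spec
  have := hp _ _ (facet_infl_liftF hf hS) (facet_infl_liftF hf hS')
  rwa [liftF_card, liftF_card] at this

lemma infl_del_of_mem {Δ0 : Set (Finset α)} {c : α → Finset β} {x : α} {i : β}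
    (hi : i ∈ c x) :
    del (Infl Δ0 c) (x, i) = Infl Δ0 (Function.update c x (c x \ {i})) := by
  ext F
  constructor
  · rintro ⟨hF, hxi⟩
    refine ⟨?_, hF.2.1, hF.2.2⟩
    intro p hp
    by_cases h : p.1 = x
    · rw [h, Function.update_self]
      refine Finset.mem_sdiff.2 ⟨h ▸ hF.1 p hp, ?_⟩
      simp only [Finset.mem_singleton]
      intro h2
      have heq : p = (x, i) := Prod.ext h h2
      rw [heq] at hp
      exact hxi hp
    · rw [Function.update_of_ne h]
      exact hF.1 p hp
  · rintro ⟨h1, h2, h3⟩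
    refine ⟨⟨?_, h2, h3⟩, ?_⟩
    · intro p hp
      by_cases h : p.1 = x
      · have := h1 p hp
        rw [h, Function.update_self] at this
        exact h ▸ (Finset.mem_sdiff.1 this).1
      · have := h1 p hp
        rwa [Function.update_of_ne h] at this
    · intro hmem
      have := h1 _ hmem
      rw [Function.update_self] at this
      simp at this

lemma infl_del_of_single {Δ0 : Set (Finset α)} {c : α → Finset β} {x : α} {i : β}
    (hcx : c x = {i}) :
    del (Infl Δ0 c) (x, i) = Infl (del Δ0 x) c := by
  ext F
  constructor
  · rintro ⟨hF, hxi⟩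
    have hnx : ∀ p ∈ F, p.1 ≠ x := by
      intro p hp h
      have := hF.1 p hp
      rw [h, hcx, Finset.mem_singleton] at this
      have heq : p = (x, i) := Prod.ext h this
      rw [heq] at hp
      exact hxi hp
    refine ⟨hF.1, hF.2.1, hF.2.2, ?_⟩
    intro hmem
    obtain ⟨p, hp, h⟩ := Finset.mem_image.1 hmem
    exact hnx p hp h
  · rintro ⟨h1, h2, h3, h4⟩
    refine ⟨⟨h1, h2, h3⟩, fun hmem => h4 ?_⟩
    exact Finset.mem_image_of_mem Prod.fst hmem

lemma infl_del_of_not_mem {Δ0 : Set (Finset α)} {c : α → Finset β} {x : α} {i : β}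
    (hi : i ∉ c x) : del (Infl Δ0 c) (x, i) = Infl Δ0 c := by
  ext F
  constructor
  · exact fun h => h.1
  · intro h
    refine ⟨h, fun hmem => hi ?_⟩
    exact h.1 _ hmem

lemma infl_link_eq {Δ0 : Set (Finset α)} {c : α → Finset β} {x : α} {i : β}
    (hi : i ∈ c x) :
    link (Infl Δ0 c) (x, i) = Infl (link Δ0 x) c := by
  ext F
  constructor
  · rintro ⟨hF, hni, hins⟩
    have hnx : ∀ p ∈ F, p.1 ≠ x := by
      intro p hp h
      have h2 : p ∈ insert (x, i) F := Finset.mem_insert_of_mem hp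
      have h3 : (x, i) ∈ insert (x, i) F := Finset.mem_insert_self _ _
      have := hins.2.1 p h2 (x, i) h3 h
      exact hni (this ▸ hp)
    have hxim : x ∉ F.image Prod.fst := by
      intro hmem
      obtain ⟨p, hp, h⟩ := Finset.mem_image.1 hmem
      exact hnx p hp h
    refine ⟨hF.1, hF.2.1, hF.2.2, hxim, ?_⟩
    have : (insert (x, i) F).image Prod.fst = insert x (F.image Prod.fst) :=
      Finset.image_insert _ _ _
    exact this ▸ hins.2.2
  · rintro ⟨h1, h2, h3, h4, h5⟩
    have hnF : (x, i) ∉ F := fun h => h4 (Finset.mem_image_of_mem Prod.fst h)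
    refine ⟨⟨h1, h2, h3⟩, hnF, ?_, ?_, ?_⟩
    · intro p hp
      rcases Finset.mem_insert.1 hp with h | hp
      · rw [h]; exact hi
      · exact h1 p hp
    · have hne : ∀ p ∈ F, p.1 ≠ x := fun p hp h =>
        h4 (h ▸ Finset.mem_image_of_mem Prod.fst hp)
      intro p hp q hq h
      rcases Finset.mem_insert.1 hp with hm1 | hm1 <;> rcases Finset.mem_insert.1 hq with hm2 | hm2
      · rw [hm1, hm2]
      · exact absurd (by rw [← h, hm1] : q.1 = x).symm (Ne.symm (hne q hm2))
      · exact absurd (by rw [h, hm2] : p.1 = x) (hne p hm1)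
      · exact h2 p hm1 q hm2 h
    · rw [Finset.image_insert]
      exact h5

lemma isPure_of_unique {V : Type*} {Δ : Set (Finset V)} {S : Finset V}
    (huniq : ∀ F, IsFacet Δ F → F = S) : IsPure Δ := fun A B hA hB => by
  rw [huniq A hA, huniq B hB]

lemma link_unique_facet {Δ0 : Set (Finset α)} {S : Finset α} {v : α}
    (hDC : DC Δ0) (hS : IsFacet Δ0 S) (huniq : ∀ F, IsFacet Δ0 F → F = S) (hv : v ∈ S) :
    IsFacet (link Δ0 v) (S \ {v}) ∧ ∀ L, IsFacet (link Δ0 v) L → L = S \ {v} := by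
  have hsubS : ∀ A ∈ Δ0, A ⊆ S := by
    intro A hA
    obtain ⟨F, hAF, hF⟩ := exists_facet_s2 hA
    exact (huniq F hF) ▸ hAF
  have hmem : S \ {v} ∈ link Δ0 v :=
    ⟨hDC Finset.sdiff_subset hS.1, by simp, by rw [ins_sdiff hv]; exact hS.1⟩
  have hsub : ∀ L ∈ link Δ0 v, L ⊆ S \ {v} := by
    intro L hL
    exact Finset.subset_sdiff.2 ⟨hsubS L hL.1, Finset.disjoint_singleton_right.2 hL.2.1⟩
  refine ⟨⟨hmem, fun L hL h => Finset.Subset.antisymm h (hsub L hL)⟩, ?_⟩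
  intro L hL
  exact hL.2 _ hmem (hsub L hL.1)

lemma vd_infl_simplex (n : ℕ) : ∀ (Δ0 : Set (Finset α)) (c : α → Finset β) (S : Finset α),
    DC Δ0 → (∀ v, (c v).Nonempty) → IsFacet Δ0 S → (∀ F, IsFacet Δ0 F → F = S) →
    (∑ v ∈ S, (c v).card) ≤ n → VertexDecomposable (Infl Δ0 c) := by
  induction n using Nat.strong_induction_on with
  | _ n IH =>
    intro Δ0 c S hDC hc hS huniq hsum
    by_cases hall : ∀ v ∈ S, (c v).card = 1
    · -- the inflation is a simplex
      set f : α → β := fun v => (hc v).choose with hf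
      have hfmem : ∀ v, f v ∈ c v := fun v => (hc v).choose_spec
      have hkey : ∀ v ∈ S, ∀ j ∈ c v, j = f v := by
        intro v hv j hj
        exact Finset.card_le_one.1 (le_of_eq (hall v hv)) j hj (f v) (hfmem v)
      refine VertexDecomposable.simplex _ ⟨liftF S f, facet_infl_liftF hfmem hS, ?_⟩
      intro K hK
      have hproj : K.image Prod.fst = S := huniq _ (facet_infl_proj hDC hc hK)
      ext p
      rw [mem_liftF]
      constructor
      · intro hp
        have h1 : p.1 ∈ S := hproj ▸ Finset.mem_image_of_mem Prod.fst hp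
        exact ⟨h1, hkey p.1 h1 p.2 (hK.1.1 p hp)⟩
      · rintro ⟨h1, h2⟩
        have : p.1 ∈ K.image Prod.fst := hproj.symm ▸ h1
        obtain ⟨q, hq, hq1⟩ := Finset.mem_image.1 this
        have : q.2 = f p.1 := hq1 ▸ hkey q.1 (hq1.symm ▸ h1) q.2 (hK.1.1 q hq)
        have heq : q = p := Prod.ext hq1 (by rw [this, h2])
        exact heq ▸ hq
    · push_neg at hall
      obtain ⟨v, hv, hne⟩ := hall
      have h2 : 2 ≤ (c v).card := by
        have := Finset.card_pos.2 (hc v); omega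
      obtain ⟨i, hi⟩ := hc v
      set c' := Function.update c v (c v \ {i}) with hc'
      have hc'ne : ∀ w, (c' w).Nonempty := by
        intro w
        by_cases h : w = v
        · subst h
          rw [hc', Function.update_self, Finset.sdiff_singleton_eq_erase]
          rw [← Finset.card_pos, Finset.card_erase_of_mem hi]
          omega
        · rw [hc', Function.update_of_ne h]; exact hc w
      have hdel := infl_del_of_mem (Δ0 := Δ0) (c := c) hi
      have hlink := infl_link_eq (Δ0 := Δ0) (c := c) hi
      have hpure0 : IsPure Δ0 := isPure_of_unique huniq
      have hlinkfacts := link_unique_facet hDC hS huniq hv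
      -- sum computations
      have hsv : ∑ w ∈ S, (c w).card = (c v).card + ∑ w ∈ S.erase v, (c w).card :=
        (Finset.add_sum_erase S (fun w => (c w).card) hv).symm
      have hsv' : ∑ w ∈ S, (c' w).card = ((c v).card - 1) + ∑ w ∈ S.erase v, (c w).card := by
        rw [← Finset.add_sum_erase S (fun w => (c' w).card) hv]
        congr 1
        · rw [hc', Function.update_self, Finset.sdiff_singleton_eq_erase,
            Finset.card_erase_of_mem hi]
        · apply Finset.sum_congr rfl
          intro w hw
          rw [hc', Function.update_of_ne (Finset.ne_of_mem_erase hw)]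
      have hn2 : 2 ≤ n := by omega
      apply VertexDecomposable.step _ (v, i)
      · rw [hdel]; exact (hpure0.infl hDC hc'ne)
      · rw [hlink]
        exact (isPure_of_unique hlinkfacts.2).infl (hDC.link v) hc
      · rw [hdel]
        exact IH (n - 1) (by omega) Δ0 c' S hDC hc'ne hS huniq (by omega)
      · rw [hlink]
        refine IH (n - 2) (by omega) (link Δ0 v) c (S \ {v}) (hDC.link v) hc
          hlinkfacts.1 hlinkfacts.2 ?_
        rw [Finset.sdiff_singleton_eq_erase]
        omega

theorem vd_infl {Δ0 : Set (Finset α)} (hvd : VertexDecomposable Δ0) :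
    DC Δ0 → IsPure Δ0 → ∀ c : α → Finset β, (∀ v, (c v).Nonempty) →
      VertexDecomposable (Infl Δ0 c) := by
  induction hvd with
  | simplex Δ0 h =>
    intro hDC _ c hc
    obtain ⟨S, hS, huniq0⟩ := h
    exact vd_infl_simplex _ Δ0 c S hDC hc hS (fun F hF => huniq0 F hF) le_rfl
  | step Δ0 x hdp hlp hd hl IHd IHl =>
    intro hDC hp c hc
    suffices Haux : ∀ k, ∀ c : α → Finset β, (∀ v, (c v).Nonempty) → (c x).card ≤ k →
        VertexDecomposable (Infl Δ0 c) from Haux _ c hc le_rfl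
    intro k
    induction k with
    | zero =>
      intro c hc hck
      exact absurd (Finset.card_pos.2 (hc x)) (by omega)
    | succ k IHk =>
      intro c hc hck
      by_cases h1 : (c x).card = 1
      · obtain ⟨i, hi⟩ := Finset.card_eq_one.1 h1
        apply VertexDecomposable.step _ (x, i)
        · rw [infl_del_of_single hi]; exact hdp.infl (hDC.del x) hc
        · rw [infl_link_eq (hi ▸ Finset.mem_singleton_self i)]
          exact hlp.infl (hDC.link x) hc
        · rw [infl_del_of_single hi]; exact IHd (hDC.del x) hdp c hc
        · rw [infl_link_eq (hi ▸ Finset.mem_singleton_self i)]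
          exact IHl (hDC.link x) hlp c hc
      · have h2 : 2 ≤ (c x).card := by
          have := Finset.card_pos.2 (hc x); omega
        obtain ⟨i, hi⟩ := hc x
        set c' := Function.update c x (c x \ {i}) with hc'
        have hc'ne : ∀ w, (c' w).Nonempty := by
          intro w
          by_cases h : w = x
          · subst h
            rw [hc', Function.update_self, Finset.sdiff_singleton_eq_erase,
              ← Finset.card_pos, Finset.card_erase_of_mem hi]
            omega
          · rw [hc', Function.update_of_ne h]; exact hc w
        apply VertexDecomposable.step _ (x, i)
        · rw [infl_del_of_mem hi]; exact hp.infl hDC hc'ne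
        · rw [infl_link_eq hi]; exact hlp.infl (hDC.link x) hc
        · rw [infl_del_of_mem hi]
          refine IHk c' hc'ne ?_
          rw [hc', Function.update_self, Finset.sdiff_singleton_eq_erase,
            Finset.card_erase_of_mem hi]
          omega
        · rw [infl_link_eq hi]; exact IHl (hDC.link x) hlp c hc

theorem vd_of_infl {Δh : Set (Finset (α × β))} (hvd : VertexDecomposable Δh) :
    ∀ (Δ0 : Set (Finset α)) (c : α → Finset β), DC Δ0 → (∀ v, (c v).Nonempty) →
      Δh = Infl Δ0 c → VertexDecomposable Δ0 := by
  induction hvd with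
  | simplex Δh h =>
    intro Δ0 c hDC hc heq
    subst heq
    obtain ⟨Fh, hFh, huniq⟩ := h
    refine VertexDecomposable.simplex _ ⟨Fh.image Prod.fst, facet_infl_proj hDC hc hFh, ?_⟩
    intro S hS
    have hf : ∀ v, (fun v => (hc v).choose) v ∈ c v := fun v => (hc v).choose_spec
    have h1 := huniq _ (facet_infl_liftF hf hS)
    rw [← h1, liftF_image_fst]
  | step Δh p hdp hlp hd hl IHd IHl =>
    intro Δ0 c hDC hc heq
    subst heq
    obtain ⟨x, i⟩ := p
    by_cases hi : i ∈ c x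
    · by_cases hone : c x = {i}
      · refine VertexDecomposable.step _ x ?_ ?_ ?_ ?_
        · exact ((infl_del_of_single hone) ▸ hdp).of_infl (hDC.del x) hc
        · exact ((infl_link_eq hi) ▸ hlp).of_infl (hDC.link x) hc
        · exact IHd (del Δ0 x) c (hDC.del x) hc (infl_del_of_single hone)
        · exact IHl (link Δ0 x) c (hDC.link x) hc (infl_link_eq hi)
      · set c' := Function.update c x (c x \ {i}) with hc'
        have hc'ne : ∀ w, (c' w).Nonempty := by
          intro w
          by_cases h : w = x
          · rw [h, hc', Function.update_self]
            obtain ⟨j, hj, hji⟩ : ∃ j ∈ c x, j ≠ i := by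
              by_contra hcon
              push_neg at hcon
              exact hone (Finset.Subset.antisymm (fun j hj => Finset.mem_singleton.2
                (hcon j hj)) (Finset.singleton_subset_iff.2 hi))
            exact ⟨j, Finset.mem_sdiff.2 ⟨hj, Finset.notMem_singleton.2 hji⟩⟩
          · rw [hc', Function.update_of_ne h]; exact hc w
        exact IHd Δ0 c' hDC hc'ne (infl_del_of_mem hi)
    · exact IHd Δ0 c hDC hc (infl_del_of_not_mem hi)

end Infl



section Lex
set_option linter.unusedSectionVars false
variable {α β : Type*} [Fintype α] [Fintype β] [DecidableEq α] [DecidableEq β]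

lemma DC_ind {V : Type*} (G : SimpleGraph V) : DC (indComplex G) :=
  fun F K h hK v hv w hw => hK v (h hv) w (h hw)

lemma singleton_mem_ind {V : Type*} (G : SimpleGraph V) (v : V) :
    ({v} : Finset V) ∈ indComplex G := by
  intro a ha b hb
  rw [Finset.mem_singleton] at ha hb
  rw [ha, hb]
  exact G.loopless.irrefl v

lemma empty_mem_ind_s2 {V : Type*} (G : SimpleGraph V) : (∅ : Finset V) ∈ indComplex G := by
  intro a ha
  exact absurd ha (Finset.notMem_empty a)

variable (G : SimpleGraph α) (H : SimpleGraph β)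

lemma lexProd_adj {p q : α × β} :
    (lexProd G H).Adj p q ↔ G.Adj p.1 q.1 ∨ (p.1 = q.1 ∧ H.Adj p.2 q.2) := Iff.rfl

lemma ind_lex_eq_infl (hH : ∀ a b : β, a ≠ b → H.Adj a b) :
    indComplex (lexProd G H) = Infl (indComplex G) (fun _ => (Finset.univ : Finset β)) := by
  ext F
  constructor
  · intro h
    refine ⟨fun p _ => Finset.mem_univ _, ?_, ?_⟩
    · intro p hp q hq h1
      by_contra hne
      have h2 : p.2 ≠ q.2 := fun he => hne (Prod.ext h1 he)
      exact h p hp q hq (Or.inr ⟨h1, hH _ _ h2⟩)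
    · intro v hv w hw hadj
      obtain ⟨p, hp, hp1⟩ := Finset.mem_image.1 hv
      obtain ⟨q, hq, hq1⟩ := Finset.mem_image.1 hw
      exact h p hp q hq (Or.inl (by rw [hp1, hq1]; exact hadj))
  · rintro ⟨-, hinj, him⟩ p hp q hq hadj
    rcases hadj with h | ⟨h1, h2⟩
    · exact him p.1 (Finset.mem_image_of_mem _ hp) q.1 (Finset.mem_image_of_mem _ hq) h
    · have := hinj p hp q hq h1
      exact H.loopless.irrefl q.2 (by rw [this] at h2; exact h2)

/-- The union of fibers construction. -/
def bun (S : Finset α) (M : α → Finset β) : Finset (α × β) :=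
  S.biUnion fun v => (M v).image fun y => (v, y)

lemma mem_bun {S : Finset α} {M : α → Finset β} {p : α × β} :
    p ∈ bun S M ↔ p.1 ∈ S ∧ p.2 ∈ M p.1 := by
  simp only [bun, Finset.mem_biUnion, Finset.mem_image]
  constructor
  · rintro ⟨v, hv, y, hy, he⟩
    rw [← he]
    exact ⟨hv, hy⟩
  · rintro ⟨h1, h2⟩
    exact ⟨p.1, h1, p.2, h2, rfl⟩

lemma bun_card {S : Finset α} {M : α → Finset β} :
    (bun S M).card = ∑ v ∈ S, (M v).card := by
  rw [bun, Finset.card_biUnion]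
  · apply Finset.sum_congr rfl
    intro v _
    exact Finset.card_image_of_injective _ (fun y z h => congrArg Prod.snd h)
  · intro v _ w _ hvw
    rw [Function.onFun, Finset.disjoint_left]
    intro p hp hq
    obtain ⟨y, _, hy⟩ := Finset.mem_image.1 hp
    obtain ⟨z, _, hz⟩ := Finset.mem_image.1 hq
    exact hvw ((congrArg Prod.fst hy).trans (congrArg Prod.fst hz).symm)

lemma indH_facet_nonempty [Nonempty β] {M : Finset β} (hM : IsFacet (indComplex H) M) :
    M.Nonempty := by
  rcases Finset.eq_empty_or_nonempty M with he | h
  · exfalso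
    set b := Classical.arbitrary β
    have h1 := hM.2 {b} (singleton_mem_ind H b) (he ▸ Finset.empty_subset _)
    rw [he] at h1
    exact Finset.singleton_ne_empty b h1.symm
  · exact h

lemma bun_facet [Nonempty β] {S : Finset α} {M : α → Finset β}
    (hS : IsFacet (indComplex G) S) (hM : ∀ v, IsFacet (indComplex H) (M v)) :
    IsFacet (indComplex (lexProd G H)) (bun S M) := by
  constructor
  · intro p hp q hq hadj
    rw [mem_bun] at hp hq
    rcases hadj with h | ⟨h1, h2⟩
    · exact hS.1 p.1 hp.1 q.1 hq.1 h
    · exact (hM p.1).1 p.2 hp.2 q.2 (by rw [h1]; exact hq.2) h2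
  · intro K hK hsub
    have hKsub : K ⊆ bun S M := by
      intro p hp
      rw [mem_bun]
      by_cases hu : p.1 ∈ S
      · refine ⟨hu, ?_⟩
        have hins : insert p.2 (M p.1) ∈ indComplex H := by
          intro y hy z hz
          rcases Finset.mem_insert.1 hy with rfl | hy <;>
            rcases Finset.mem_insert.1 hz with rfl | hz
          · exact H.loopless.irrefl _
          · intro hadj
            exact hK p hp (p.1, z) (hsub (mem_bun.2 ⟨hu, hz⟩)) (Or.inr ⟨rfl, hadj⟩)
          · intro hadj
            exact hK (p.1, y) (hsub (mem_bun.2 ⟨hu, hy⟩)) p hp (Or.inr ⟨rfl, hadj⟩)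
          · exact (hM p.1).1 y hy z hz
        have h1 := (hM p.1).2 _ hins (Finset.subset_insert _ _)
        rw [h1]
        exact Finset.mem_insert_self _ _
      · exfalso
        have hins : insert p.1 S ∈ indComplex G := by
          intro v hv w hw
          rcases Finset.mem_insert.1 hv with rfl | hv <;>
            rcases Finset.mem_insert.1 hw with rfl | hw
          · exact G.loopless.irrefl _
          · intro hadj
            obtain ⟨y, hy⟩ := indH_facet_nonempty H (hM w)
            exact hK p hp (w, y) (hsub (mem_bun.2 ⟨hw, hy⟩)) (Or.inl hadj)
          · intro hadj
            obtain ⟨y, hy⟩ := indH_facet_nonempty H (hM v)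
            exact hK p hp (v, y) (hsub (mem_bun.2 ⟨hv, hy⟩)) (Or.inl hadj.symm)
          · exact hS.1 v hv w hw
        have h1 := hS.2 _ hins (Finset.subset_insert _ _)
        exact hu (by rw [h1]; exact Finset.mem_insert_self _ _)
    exact (Finset.Subset.antisymm hsub hKsub).symm ▸ rfl

lemma isPure_indH_of_lex [Nonempty β] (hedge : ∃ v w, G.Adj v w)
    (hp : IsPure (indComplex (lexProd G H))) : IsPure (indComplex H) := by
  obtain ⟨v0, w0, hvw⟩ := hedge
  obtain ⟨S, hsubS, hS⟩ := exists_facet_s2 (singleton_mem_ind G v0)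
  have hv0 : v0 ∈ S := hsubS (Finset.mem_singleton_self v0)
  have hD : ∀ _v : α, ∃ D, IsFacet (indComplex H) D := by
    intro _v
    obtain ⟨D, _, hD⟩ := exists_facet_s2 (empty_mem_ind_s2 H)
    exact ⟨D, hD⟩
  choose D hDf using hD
  intro M M' hM hM'
  set A := fun v => if v = v0 then M else D v with hA
  set A' := fun v => if v = v0 then M' else D v with hA'
  have hAf : ∀ v, IsFacet (indComplex H) (A v) := by
    intro v
    by_cases h : v = v0 <;> simp only [hA, h, if_true, if_false] <;> [exact hM; skip]
    exact hDf v
  have hA'f : ∀ v, IsFacet (indComplex H) (A' v) := by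
    intro v
    by_cases h : v = v0 <;> simp only [hA', h, if_true, if_false] <;> [exact hM'; skip]
    exact hDf v
  have h1 := hp _ _ (bun_facet G H hS hAf) (bun_facet G H hS hA'f)
  rw [bun_card, bun_card, ← Finset.add_sum_erase S _ hv0, ← Finset.add_sum_erase S _ hv0] at h1
  have h2 : ∑ v ∈ S.erase v0, (A v).card = ∑ v ∈ S.erase v0, (A' v).card := by
    apply Finset.sum_congr rfl
    intro w hw
    have hne := Finset.ne_of_mem_erase hw
    simp only [hA, hA', if_neg hne]
  have hAv0 : A v0 = M := by simp [hA]
  have hA'v0 : A' v0 = M' := by simp [hA']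
  rw [hAv0, hA'v0, h2] at h1
  omega

lemma mem_fib_s2 {F : Finset (α × β)} {u : α} {y : β} :
    y ∈ (F.filter (fun p => p.1 = u)).image Prod.snd ↔ (u, y) ∈ F := by
  simp only [Finset.mem_image, Finset.mem_filter]
  constructor
  · rintro ⟨p, ⟨hp, hp1⟩, hp2⟩
    have : p = (u, y) := Prod.ext hp1 hp2
    exact this ▸ hp
  · intro h
    exact ⟨(u, y), ⟨h, rfl⟩, rfl⟩

lemma fib_facet {F : Finset (α × β)} {u : α}
    (hF : IsFacet (indComplex (lexProd G H)) F) (hu : u ∈ F.image Prod.fst) :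
    IsFacet (indComplex H) ((F.filter (fun p => p.1 = u)).image Prod.snd) := by
  constructor
  · intro y hy z hz hadj
    exact hF.1 (u, y) (mem_fib_s2.1 hy) (u, z) (mem_fib_s2.1 hz) (Or.inr ⟨rfl, hadj⟩)
  · intro N' hN' hsub
    refine Finset.Subset.antisymm hsub fun z hz => ?_
    rw [mem_fib_s2]
    have hz' : ∀ q ∈ F, ¬ (lexProd G H).Adj (u, z) q := by
      intro q hq hadj
      rcases hadj with h | ⟨h1, h2⟩
      · obtain ⟨p0, hp0, hp01⟩ := Finset.mem_image.1 hu
        exact hF.1 p0 hp0 q hq (Or.inl (by rw [hp01]; exact h))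
      · have hqe : q = (u, q.2) := Prod.ext h1.symm rfl
        have hqN : q.2 ∈ (F.filter (fun p => p.1 = u)).image Prod.snd :=
          mem_fib_s2.2 (hqe ▸ hq)
        exact hN' z hz q.2 (hsub hqN) h2
    have hins : insert (u, z) F ∈ indComplex (lexProd G H) := by
      intro a ha b hb
      rcases Finset.mem_insert.1 ha with rfl | ha <;> rcases Finset.mem_insert.1 hb with rfl | hb
      · exact (lexProd G H).loopless.irrefl _
      · exact hz' b hb
      · intro hadj
        exact hz' a ha ((lexProd G H).adj_symm hadj)
      · exact hF.1 a ha b hb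
    have h1 := hF.2 _ hins (Finset.subset_insert _ _)
    rw [h1]
    exact Finset.mem_insert_self _ _

lemma proj_subset_of_FR {F F' : Finset (α × β)}
    (h2 : ∀ M, IsFacet (indComplex H) M → 2 ≤ M.card)
    (h : FR (indComplex (lexProd G H)) F F') : F.image Prod.fst ⊆ F'.image Prod.fst := by
  intro u hu
  have hNf := fib_facet G H h.1 hu
  have hcard := h2 _ hNf
  obtain ⟨y, hy, z, hz, hyz⟩ := Finset.one_lt_card.1 (lt_of_lt_of_le one_lt_two hcard)
  have hyF : (u, y) ∈ F := mem_fib_s2.1 hy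
  have hzF : (u, z) ∈ F := mem_fib_s2.1 hz
  by_cases hy' : (u, y) ∈ F'
  · exact Finset.mem_image_of_mem Prod.fst hy'
  by_cases hz' : (u, z) ∈ F'
  · exact Finset.mem_image_of_mem Prod.fst hz'
  exfalso
  have hpair : ({(u, y), (u, z)} : Finset (α × β)) ⊆ F \ F' := by
    intro p hp
    rcases Finset.mem_insert.1 hp with rfl | hp
    · exact Finset.mem_sdiff.2 ⟨hyF, hy'⟩
    · rw [Finset.mem_singleton] at hp
      rw [hp]
      exact Finset.mem_sdiff.2 ⟨hzF, hz'⟩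
  have hne : ((u, y) : α × β) ≠ (u, z) := fun h => hyz (congrArg Prod.snd h)
  have := Finset.card_le_card hpair
  rw [Finset.card_pair hne] at this
  have hle := h.2.2
  omega

lemma proj_subset_of_chain {F F' : Finset (α × β)}
    (h2 : ∀ M, IsFacet (indComplex H) M → 2 ≤ M.card)
    (h : Relation.ReflTransGen (FR (indComplex (lexProd G H))) F F') :
    F.image Prod.fst ⊆ F'.image Prod.fst := by
  induction h with
  | refl => exact Finset.Subset.refl _
  | tail _ hstep ih => exact ih.trans (proj_subset_of_FR G H h2 hstep)

lemma H_complete [Nonempty β] (hedge : ∃ v w, G.Adj v w)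
    (hp : IsPure (indComplex (lexProd G H)))
    (hvd : VertexDecomposable (indComplex (lexProd G H))) :
    ∀ a b : β, a ≠ b → H.Adj a b := by
  by_contra hcon
  push_neg at hcon
  obtain ⟨a, b, hab, hnadj⟩ := hcon
  have hpH := isPure_indH_of_lex G H hedge hp
  have hpair : ({a, b} : Finset β) ∈ indComplex H := by
    intro y hy z hz
    have hy' := Finset.mem_insert.1 hy
    have hz' := Finset.mem_insert.1 hz
    rw [Finset.mem_singleton] at hy' hz'
    rcases hy' with h1 | h1 <;> rcases hz' with h2 | h2 <;> rw [h1, h2]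
    · exact H.loopless.irrefl _
    · exact hnadj
    · exact fun h => hnadj h.symm
    · exact H.loopless.irrefl _
  obtain ⟨M0, hsubM0, hM0⟩ := exists_facet_s2 hpair
  have h2 : ∀ M, IsFacet (indComplex H) M → 2 ≤ M.card := by
    intro M hM
    rw [hpH M M0 hM hM0]
    calc 2 = ({a, b} : Finset β).card := (Finset.card_pair hab).symm
      _ ≤ M0.card := Finset.card_le_card hsubM0
  obtain ⟨v0, w0, hvw⟩ := hedge
  obtain ⟨F0, hs0, hF0⟩ := exists_facet_s2 (singleton_mem_ind (lexProd G H) (v0, a))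
  obtain ⟨F1, hs1, hF1⟩ := exists_facet_s2 (singleton_mem_ind (lexProd G H) (w0, a))
  have hchain := sc_of_vd hvd (DC_ind _) hp F0 F1 hF0 hF1
  have hmono := proj_subset_of_chain G H h2 hchain
  have hv0 : v0 ∈ F1.image Prod.fst :=
    hmono (Finset.mem_image_of_mem Prod.fst (hs0 (Finset.mem_singleton_self _)))
  have hw0 : w0 ∈ F1.image Prod.fst :=
    Finset.mem_image_of_mem Prod.fst (hs1 (Finset.mem_singleton_self _))
  obtain ⟨p, hp1, hp2⟩ := Finset.mem_image.1 hv0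
  obtain ⟨q, hq1, hq2⟩ := Finset.mem_image.1 hw0
  exact hF1.1 p hp1 q hq1 (Or.inl (by rw [hp2, hq2]; exact hvw))

end Lex


theorem stmt2 {α β : Type*} [Fintype α] [Fintype β] [DecidableEq α] [DecidableEq β]
    [Nonempty β] (G : SimpleGraph α) (H : SimpleGraph β)
    (hG : ∃ v w, G.Adj v w) :
    (IsPure (indComplex (lexProd G H)) ∧ VertexDecomposable (indComplex (lexProd G H))) ↔
      ((IsPure (indComplex G) ∧ VertexDecomposable (indComplex G)) ∧
        ∃ m : ℕ, 1 ≤ m ∧ Nonempty (H ≃g (⊤ : SimpleGraph (Fin m)))) := by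
  have hc : ∀ _v : α, (Finset.univ : Finset β).Nonempty := fun _ => Finset.univ_nonempty
  constructor
  · rintro ⟨hp, hvd⟩
    have hcomp := H_complete G H hG hp hvd
    have heq := ind_lex_eq_infl G H hcomp
    rw [heq] at hp hvd
    refine ⟨⟨hp.of_infl (DC_ind G) hc, vd_of_infl hvd _ _ (DC_ind G) hc rfl⟩,
      Fintype.card β, Fintype.card_pos, ⟨⟨Fintype.equivFin β, ?_⟩⟩⟩
    intro x y
    simp only [SimpleGraph.top_adj, ne_eq, Equiv.apply_eq_iff_eq, Equiv.coe_fn_mk]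
    constructor
    · intro hne
      exact hcomp x y (by simpa using hne)
    · intro hadj
      simpa using hadj.ne
  · rintro ⟨⟨hpG, hvdG⟩, m, _hm, ⟨e⟩⟩
    have hcomp : ∀ x y : β, x ≠ y → H.Adj x y := by
      intro x y hxy
      have hadj : (⊤ : SimpleGraph (Fin m)).Adj (e x) (e y) := by
        simp only [SimpleGraph.top_adj, ne_eq]
        exact fun h => hxy (e.toEquiv.injective h)
      exact e.map_rel_iff.1 hadj
    have heq := ind_lex_eq_infl G H hcomp
    rw [heq]
    exact ⟨hpG.infl (DC_ind G) hc, vd_infl hvdG (DC_ind G) hpG _ hc⟩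
end

section
/- Let G be a finite simple graph on vertices x_1, …, x_n and let (s_1, …, s_n) be an n-tuple of positive integers. If the independence complex Ind(G) is shellable, then the independence complex of the expansion G^{(s_1,…,s_n)} is shellable. -/
open Finset

variable {V : Type*}

section ExpAux

variable {V : Type*} [DecidableEq V] {G : SimpleGraph V} {s : V → ℕ}

lemma exp_fst_ne {A : Finset (Σ v : V, Fin (s v))}
    (hA : A ∈ indComplex (expansion G s)) {p q : Σ v : V, Fin (s v)}
    (hp : p ∈ A) (hq : q ∈ A) (hne : p ≠ q) : p.1 ≠ q.1 ∧ ¬ G.Adj p.1 q.1 :=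
  ⟨fun h => hA p hp q hq ⟨hne, Or.inr h⟩, fun h => hA p hp q hq ⟨hne, Or.inl h⟩⟩

lemma exp_image_mem {A : Finset (Σ v : V, Fin (s v))}
    (hA : A ∈ indComplex (expansion G s)) :
    A.image Sigma.fst ∈ indComplex G := by
  intro v hv w hw hadj
  simp only [Finset.mem_image] at hv hw
  obtain ⟨p, hp, rfl⟩ := hv
  obtain ⟨q, hq, rfl⟩ := hw
  have hne : p ≠ q := fun h => G.loopless.irrefl _ (h ▸ hadj)
  exact (exp_fst_ne hA hp hq hne).2 hadj

noncomputable def expLift (s : V → ℕ) (W : Finset V) (c : ∀ v, Fin (s v)) :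
    Finset (Σ v : V, Fin (s v)) :=
  W.image (fun v => ⟨v, c v⟩)

lemma image_expLift (W : Finset V) (c : ∀ v, Fin (s v)) :
    (expLift s W c).image Sigma.fst = W := by
  ext v
  simp [expLift]

lemma card_expLift (W : Finset V) (c : ∀ v, Fin (s v)) :
    (expLift s W c).card = W.card :=
  Finset.card_image_of_injective _ (fun a b h => congrArg Sigma.fst h)

lemma expLift_mem {W : Finset V} (c : ∀ v, Fin (s v)) (hW : W ∈ indComplex G) :
    expLift s W c ∈ indComplex (expansion G s) := by
  intro p hp q hq hadj
  obtain ⟨hne, hor⟩ := hadj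
  simp only [expLift, Finset.mem_image] at hp hq
  obtain ⟨v, hv, rfl⟩ := hp
  obtain ⟨w, hw, rfl⟩ := hq
  have hvw : v ≠ w := fun h => hne (by subst h; rfl)
  rcases hor with h | h
  · exact hW v hv w hw h
  · exact hvw h

noncomputable def expChc (s : V → ℕ) (hs : ∀ v, 1 ≤ s v)
    (A : Finset (Σ v : V, Fin (s v))) (v : V) : Fin (s v) :=
  if h : ∃ j : Fin (s v), (⟨v, j⟩ : Σ v : V, Fin (s v)) ∈ A then h.choose else ⟨0, hs v⟩

variable (hs : ∀ v, 1 ≤ s v)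

lemma expChc_eq {A : Finset (Σ v : V, Fin (s v))}
    (hA : A ∈ indComplex (expansion G s)) {v : V} {j : Fin (s v)}
    (hj : (⟨v, j⟩ : Σ v : V, Fin (s v)) ∈ A) : expChc s hs A v = j := by
  have h : ∃ j' : Fin (s v), (⟨v, j'⟩ : Σ v : V, Fin (s v)) ∈ A := ⟨j, hj⟩
  rw [expChc, dif_pos h]
  by_contra hne
  have hne' : (⟨v, h.choose⟩ : Σ v : V, Fin (s v)) ≠ ⟨v, j⟩ := by
    intro heq
    injection heq with h1 h2
    exact hne h2
  exact (exp_fst_ne hA h.choose_spec hj hne').1 rfl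

lemma expChc_not_mem {A : Finset (Σ v : V, Fin (s v))} {v : V}
    (h : v ∉ A.image Sigma.fst) : expChc s hs A v = ⟨0, hs v⟩ := by
  rw [expChc, dif_neg]
  rintro ⟨j, hj⟩
  exact h (Finset.mem_image_of_mem Sigma.fst hj)

lemma expChc_mem_of {A : Finset (Σ v : V, Fin (s v))}
    (hA : A ∈ indComplex (expansion G s)) {v : V} (hv : v ∈ A.image Sigma.fst) :
    (⟨v, expChc s hs A v⟩ : Σ v : V, Fin (s v)) ∈ A := by
  rw [Finset.mem_image] at hv
  obtain ⟨p, hp, rfl⟩ := hv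
  rw [expChc_eq hs hA hp]
  exact hp

lemma eq_expLift {A : Finset (Σ v : V, Fin (s v))}
    (hA : A ∈ indComplex (expansion G s)) :
    A = expLift s (A.image Sigma.fst) (expChc s hs A) := by
  apply Finset.Subset.antisymm
  · intro p hp
    rw [expLift, Finset.mem_image]
    refine ⟨p.1, Finset.mem_image_of_mem Sigma.fst hp, ?_⟩
    rw [expChc_eq hs hA hp]
  · intro p hp
    rw [expLift, Finset.mem_image] at hp
    obtain ⟨v, hv, rfl⟩ := hp
    exact expChc_mem_of hs hA hv

lemma expChc_expLift {W : Finset V} (hW : W ∈ indComplex G) (c : ∀ v, Fin (s v)) (w : V) :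
    expChc s hs (expLift s W c) w = if w ∈ W then c w else ⟨0, hs w⟩ := by
  split_ifs with h
  · exact expChc_eq hs (expLift_mem c hW) (Finset.mem_image_of_mem _ h)
  · exact expChc_not_mem hs (by rw [image_expLift]; exact h)

lemma exp_injOn {A : Finset (Σ v : V, Fin (s v))}
    (hA : A ∈ indComplex (expansion G s)) :
    (A.image Sigma.fst).card = A.card := by
  apply Finset.card_image_of_injOn
  intro p hp q hq h
  by_contra hne
  exact (exp_fst_ne hA (Finset.mem_coe.mp hp) (Finset.mem_coe.mp hq) hne).1 h

lemma expLift_facet {W : Finset V} (hW : IsFacet (indComplex G) W) (c : ∀ v, Fin (s v)) :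
    IsFacet (indComplex (expansion G s)) (expLift s W c) := by
  refine ⟨expLift_mem c hW.1, fun B hB hsub => ?_⟩
  apply Finset.eq_of_subset_of_card_le hsub
  have h1 : W = B.image Sigma.fst := by
    apply hW.2 _ (exp_image_mem hB)
    rw [← image_expLift W c]
    exact Finset.image_subset_image hsub
  rw [card_expLift, h1, exp_injOn hB]

include hs in
lemma exp_facet_image {A : Finset (Σ v : V, Fin (s v))}
    (hA : IsFacet (indComplex (expansion G s)) A) :
    IsFacet (indComplex G) (A.image Sigma.fst) := by
  refine ⟨exp_image_mem hA.1, fun W hW hsub => ?_⟩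
  have h1 : A ⊆ expLift s W (expChc s hs A) := by
    have := Finset.image_subset_image (f := fun v => (⟨v, expChc s hs A v⟩ : Σ v : V, Fin (s v))) hsub
    rw [← expLift, ← expLift, ← eq_expLift hs hA.1] at this
    exact this
  have h2 := hA.2 _ (expLift_mem _ hW) h1
  rw [h2, image_expLift]

end ExpAux

section ExpOrder

noncomputable instance piLexFinNatLO (n : ℕ) : LinearOrder (Lex (Fin n → ℕ)) :=
  @linearOrderOfSTO (Πₗ _ : Fin n, ℕ) (· < ·)
    { trichotomous := (Pi.isTrichotomous_lex _ _ IsWellFounded.wf).1 } (Classical.decRel _)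

variable {V : Type*} [Fintype V] [DecidableEq V] {G : SimpleGraph V} {s : V → ℕ}
  (hs : ∀ v, 1 ≤ s v) {t : ℕ} (F : Fin t → Finset V)

noncomputable def expIdx (A : Finset (Σ v : V, Fin (s v))) : ℕ :=
  if h : ∃ i, F i = A.image Sigma.fst then (h.choose : Fin t).val else 0

lemma expIdx_spec (hinj : Function.Injective F) {A : Finset (Σ v : V, Fin (s v))}
    {i : Fin t} (h : F i = A.image Sigma.fst) : expIdx F A = i.val := by
  have hex : ∃ i, F i = A.image Sigma.fst := ⟨i, h⟩
  rw [expIdx, dif_pos hex]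
  exact congrArg Fin.val (hinj (hex.choose_spec.trans h.symm))

noncomputable def expKey (A : Finset (Σ v : V, Fin (s v))) :
    ℕ ×ₗ Lex (Fin (Fintype.card V) → ℕ) :=
  toLex (expIdx F A, toLex (fun k => (expChc s hs A ((Fintype.equivFin V).symm k)).val))

include hs in
lemma expKey_inj (hsurj : ∀ W, IsFacet (indComplex G) W → ∃ i, F i = W)
    (hinj : Function.Injective F)
    {A B : Finset (Σ v : V, Fin (s v))}
    (hA : IsFacet (indComplex (expansion G s)) A)
    (hB : IsFacet (indComplex (expansion G s)) B)
    (h : expKey hs F A = expKey hs F B) : A = B := by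
  obtain ⟨iA, hiA⟩ := hsurj _ (exp_facet_image hs hA)
  obtain ⟨iB, hiB⟩ := hsurj _ (exp_facet_image hs hB)
  have h' := congrArg ofLex h
  rw [Prod.ext_iff] at h'
  obtain ⟨h1, h2⟩ := h'
  simp only [expKey, ofLex_toLex] at h1 h2
  have hidx : (iA : ℕ) = (iB : ℕ) := by
    rw [← expIdx_spec F hinj hiA, ← expIdx_spec F hinj hiB]
    exact h1
  have himg : A.image Sigma.fst = B.image Sigma.fst := by
    rw [← hiA, ← hiB, Fin.val_injective hidx]
  have hchc : expChc s hs A = expChc s hs B := by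
    funext v
    obtain ⟨k, hk⟩ := (Fintype.equivFin V).symm.surjective v
    subst hk
    have h3 := congrArg ofLex h2
    have h4 := congrFun h3 k
    simp only [ofLex_toLex] at h4
    exact Fin.val_injective h4
  rw [eq_expLift hs hA.1, eq_expLift hs hB.1, himg, hchc]

end ExpOrder


theorem stmt14 {V : Type*} [Fintype V] [DecidableEq V] (G : SimpleGraph V)
    (s : V → ℕ) (hs : ∀ v, 1 ≤ s v)
    (hsh : Shellable (indComplex G)) :
    Shellable (indComplex (expansion G s)) := by
  classical
  obtain ⟨hpure, t, F, hfac, hsurj, hinj, hshell⟩ := hsh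
  -- purity
  have hpure' : IsPure (indComplex (expansion G s)) := by
    intro A B hA hB
    rw [← exp_injOn hA.1, ← exp_injOn hB.1]
    exact hpure _ _ (exp_facet_image hs hA) (exp_facet_image hs hB)
  refine ⟨hpure', ?_⟩
  -- the finset of facets and the key ordering
  set Fac : Finset (Finset (Σ v : V, Fin (s v))) :=
    Finset.univ.filter (fun A => IsFacet (indComplex (expansion G s)) A) with hFac
  set keys := Fac.image (expKey hs F) with hkeys
  set e := keys.orderIsoOfFin rfl with he
  have hmem : ∀ i : Fin keys.card, ∃ A, IsFacet (indComplex (expansion G s)) A ∧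
      expKey hs F A = (e i : ℕ ×ₗ Lex (Fin (Fintype.card V) → ℕ)) := by
    intro i
    obtain ⟨A, hA, hk⟩ := Finset.mem_image.mp
      (show ((e i : ℕ ×ₗ Lex (Fin (Fintype.card V) → ℕ))) ∈ Fac.image (expKey hs F) from (e i).2)
    exact ⟨A, (Finset.mem_filter.mp hA).2, hk⟩
  refine ⟨keys.card, fun i => (hmem i).choose, ?_, ?_, ?_, ?_⟩
  · exact fun i => (hmem i).choose_spec.1
  -- surjectivity onto facets
  · intro A hA
    have hk : expKey hs F A ∈ keys :=
      Finset.mem_image_of_mem _ (Finset.mem_filter.mpr ⟨Finset.mem_univ _, hA⟩)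
    obtain ⟨i, hi⟩ := e.surjective ⟨_, hk⟩
    refine ⟨i, expKey_inj hs F hsurj hinj (hmem i).choose_spec.1 hA ?_⟩
    show expKey hs F (hmem i).choose = expKey hs F A
    rw [(hmem i).choose_spec.2, hi]
  -- injectivity
  · intro i j hij
    apply e.injective
    apply Subtype.ext
    rw [← (hmem i).choose_spec.2, ← (hmem j).choose_spec.2]
    exact congrArg (expKey hs F) hij
  -- the shelling condition
  · intro i j hji
    show ∃ x ∈ (hmem i).choose \ (hmem j).choose,
      ∃ k, k < i ∧ (hmem i).choose \ (hmem k).choose = {x}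
    have hA := (hmem i).choose_spec.1
    have hB := (hmem j).choose_spec.1
    set A := (hmem i).choose with hAdef
    set B := (hmem j).choose with hBdef
    -- key comparison
    have hkeylt : expKey hs F B < expKey hs F A := by
      rw [(hmem i).choose_spec.2, (hmem j).choose_spec.2]
      exact Subtype.coe_lt_coe.mpr (e.strictMono hji)
    -- a facet with smaller key is some earlier (hmem m).choose
    have hearlier : ∀ C, IsFacet (indComplex (expansion G s)) C →
        expKey hs F C < expKey hs F A → ∃ m, m < i ∧ (hmem m).choose = C := by
      intro C hC hlt
      have hk : expKey hs F C ∈ keys :=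
        Finset.mem_image_of_mem _ (Finset.mem_filter.mpr ⟨Finset.mem_univ _, hC⟩)
      obtain ⟨m, hm⟩ := e.surjective ⟨_, hk⟩
      have hmC : (hmem m).choose = C := by
        apply expKey_inj hs F hsurj hinj (hmem m).choose_spec.1 hC
        rw [(hmem m).choose_spec.2, hm]
      refine ⟨m, ?_, hmC⟩
      have hm' : ((e m : ℕ ×ₗ Lex (Fin (Fintype.card V) → ℕ))) = expKey hs F C :=
        congrArg Subtype.val hm
      have hlt2 : ((e m : ℕ ×ₗ Lex (Fin (Fintype.card V) → ℕ))) <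
          ((e i : ℕ ×ₗ Lex (Fin (Fintype.card V) → ℕ))) := by
        rw [hm', ← (hmem i).choose_spec.2]
        exact hlt
      exact e.lt_iff_lt.mp (Subtype.coe_lt_coe.mp hlt2)
    obtain ⟨iA, hiA⟩ := hsurj _ (exp_facet_image hs hA)
    obtain ⟨iB, hiB⟩ := hsurj _ (exp_facet_image hs hB)
    have hAeq : A = expLift s (A.image Sigma.fst) (expChc s hs A) := eq_expLift hs hA.1
    have hcase := Prod.Lex.lt_iff.mp hkeylt
    simp only [expKey, ofLex_toLex] at hcase
    rcases hcase with hcase | ⟨heq, hcase⟩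
    · -- Case 1: different index in the shelling of G
      rw [expIdx_spec F hinj hiA, expIdx_spec F hinj hiB] at hcase
      obtain ⟨x, hx, k, hk, hdiff⟩ := hshell iA iB (show iB < iA from hcase)
      rw [Finset.mem_sdiff] at hx
      set C := expLift s (F k) (expChc s hs A) with hCdef
      have hCfac := expLift_facet (hfac k) (expChc s hs A)
      have hCkey : expKey hs F C < expKey hs F A := by
        apply Prod.Lex.lt_iff.mpr
        left
        simp only [expKey, ofLex_toLex]
        rw [expIdx_spec F hinj hiA,
          expIdx_spec F hinj (A := C) (i := k) (image_expLift (F k) _).symm]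
        exact hk
      obtain ⟨m, hmi, hmC⟩ := hearlier C hCfac hCkey
      have hxk : x ∉ F k := by
        have := hdiff ▸ Finset.mem_singleton_self x
        exact (Finset.mem_sdiff.mp this).2
      refine ⟨⟨x, expChc s hs A x⟩, ?_, m, hmi, ?_⟩
      · rw [Finset.mem_sdiff]
        constructor
        · exact expChc_mem_of hs hA.1 (hiA ▸ hx.1)
        · intro hmem'
          exact hx.2 (hiB ▸ Finset.mem_image_of_mem Sigma.fst hmem')
      · rw [hmC]
        ext p
        obtain ⟨pv, pj⟩ := p
        rw [Finset.mem_sdiff, Finset.mem_singleton]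
        constructor
        · rintro ⟨hp, hpC⟩
          have h1 : pv ∈ F iA := hiA ▸ Finset.mem_image_of_mem Sigma.fst hp
          have h2 : expChc s hs A pv = pj := expChc_eq hs hA.1 hp
          have h3 : pv ∉ F k := by
            intro hmem'
            apply hpC
            rw [hCdef, expLift, Finset.mem_image]
            exact ⟨pv, hmem', by rw [h2]⟩
          have h4 : pv = x := by
            have := Finset.mem_sdiff.mpr ⟨h1, h3⟩
            rwa [hdiff, Finset.mem_singleton] at this
          subst h4
          exact congrArg (Sigma.mk pv) h2.symm
        · intro heq'
          rw [heq']
          constructor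
          · exact expChc_mem_of hs hA.1 (hiA ▸ hx.1)
          · intro hmem'
            rw [hCdef, expLift, Finset.mem_image] at hmem'
            obtain ⟨w, hw, hw2⟩ := hmem'
            have hwx : w = x := congrArg Sigma.fst hw2
            subst hwx
            exact hxk hw
    · -- Case 2: same index, lexicographically smaller choice
      rw [expIdx_spec F hinj hiA, expIdx_spec F hinj hiB] at heq
      have hiBA : iB = iA := Fin.val_injective heq
      have himg : B.image Sigma.fst = A.image Sigma.fst := by rw [← hiA, ← hiB, hiBA]
      obtain ⟨κ, -, hκ⟩ := hcase
      have hκ' : (expChc s hs B ((Fintype.equivFin V).symm κ)).val <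
          (expChc s hs A ((Fintype.equivFin V).symm κ)).val := hκ
      set v := (Fintype.equivFin V).symm κ with hv
      have hvW : v ∈ A.image Sigma.fst := by
        by_contra hvn
        rw [expChc_not_mem hs hvn] at hκ'
        exact Nat.not_lt_zero _ hκ'
      have hWfac := exp_facet_image hs hA
      set c' := Function.update (expChc s hs A) v (expChc s hs B v) with hc'
      set C := expLift s (A.image Sigma.fst) c' with hCdef
      have hCfac := expLift_facet hWfac c'
      have hchcC : ∀ w, expChc s hs C w =
          if w ∈ A.image Sigma.fst then c' w else ⟨0, hs w⟩ :=
        expChc_expLift hs hWfac.1 c'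
      have hCkey : expKey hs F C < expKey hs F A := by
        apply Prod.Lex.lt_iff.mpr
        right
        constructor
        · simp only [expKey, ofLex_toLex]
          rw [expIdx_spec F hinj hiA,
            expIdx_spec F hinj (A := C) (i := iA) (by rw [image_expLift, hiA])]
        · simp only [expKey, ofLex_toLex]
          refine ⟨κ, ?_, ?_⟩
          · intro j' hj'
            have hne : (Fintype.equivFin V).symm j' ≠ v :=
              fun hcontr => absurd ((Fintype.equivFin V).symm.injective hcontr) (Fin.ne_of_lt hj')
            show (expChc s hs C ((Fintype.equivFin V).symm j')).val =
              (expChc s hs A ((Fintype.equivFin V).symm j')).val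
            congr 1
            rw [hchcC]
            split_ifs with hmem'
            · rw [hc', Function.update_of_ne hne]
            · rw [expChc_not_mem hs hmem']
          · show (expChc s hs C v).val < (expChc s hs A v).val
            rw [hchcC]
            rw [if_pos hvW, hc', Function.update_self]
            exact hκ'
      obtain ⟨m, hmi, hmC⟩ := hearlier C hCfac hCkey
      refine ⟨⟨v, expChc s hs A v⟩, ?_, m, hmi, ?_⟩
      · rw [Finset.mem_sdiff]
        constructor
        · exact expChc_mem_of hs hA.1 hvW
        · intro hmem'
          have := expChc_eq hs hB.1 hmem'
          rw [this] at hκ'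
          exact lt_irrefl _ hκ'
      · rw [hmC]
        ext p
        obtain ⟨pv, pj⟩ := p
        rw [Finset.mem_sdiff, Finset.mem_singleton]
        constructor
        · rintro ⟨hp, hpC⟩
          have h1 : pv ∈ A.image Sigma.fst := Finset.mem_image_of_mem Sigma.fst hp
          have h2 : expChc s hs A pv = pj := expChc_eq hs hA.1 hp
          have h3 : pv = v := by
            by_contra hne
            apply hpC
            rw [hCdef, expLift, Finset.mem_image]
            refine ⟨pv, h1, ?_⟩
            rw [hc', Function.update_of_ne hne, h2]
          subst h3
          exact congrArg (Sigma.mk v) h2.symm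
        · intro heq'
          rw [heq']
          constructor
          · exact expChc_mem_of hs hA.1 hvW
          · intro hmem'
            rw [hCdef, expLift, Finset.mem_image] at hmem'
            obtain ⟨w, hw, hw2⟩ := hmem'
            have hwv : w = v := congrArg Sigma.fst hw2
            subst hwv
            have hcc : c' v = expChc s hs A v := by
              injection hw2
            rw [hc', Function.update_self] at hcc
            rw [hcc] at hκ'
            exact lt_irrefl _ hκ'
end
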